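/- Let (G, D) be a connection of rank μ and G₀ a lattice in (G, D). Then the following are equivalent: (1) there exist a ℂ[θ]-basis (g₁,…,g_μ) of G₀ and constant matrices A₀, A₁ ∈ M_μ(ℂ) such that t(gᵢ) = Σⱼ (A₀)ᵢⱼ·gⱼ + Σⱼ (A₁)ᵢⱼ·θ·gⱼ for all i; (2) there exists a finitely generated ℂ[τ]-submodule H⁰ ⊆ G with τ·D(H⁰) ⊆ H⁰ and ℂ[τ,τ⁻¹]·H⁰ = G, such that G₀ is the internal direct sum of the ℂ-subspaces H⁰ ∩ G₀ and θ·G₀ (i.e. (H⁰ ∩ G₀) + θ·G₀ = G₀ and (H⁰ ∩ G₀) ∩ θ·G₀ = 0). -/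

import Mathlib

open LaurentPolynomial

set_option synthInstance.maxHeartbeats 1000000
set_option maxHeartbeats 2000000

noncomputable section

/-- The ring `ℂ[τ,τ⁻¹]` of Laurent polynomials. -/
abbrev 𝕃 : Type := LaurentPolynomial ℂ

/-- the variable `τ` -/
noncomputable def τ : 𝕃 := T 1

/-- `θ := τ⁻¹` -/
noncomputable def θ : 𝕃 := T (-1)

/-- `ℂ[τ]` as a subring (subalgebra) of `ℂ[τ,τ⁻¹]` -/
noncomputable def Cτ : Subalgebra ℂ 𝕃 := Algebra.adjoin ℂ {τ}

/-- `ℂ[θ]` as a subring (subalgebra) of `ℂ[τ,τ⁻¹]` -/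
noncomputable def Cθ : Subalgebra ℂ 𝕃 := Algebra.adjoin ℂ {θ}

variable {G : Type} [AddCommGroup G] [Module ℂ G] [Module 𝕃 G] [IsScalarTower ℂ 𝕃 G]

/-- scalar multiplication by a Laurent polynomial, as a `ℂ`-linear endomorphism -/
noncomputable def smulL (p : 𝕃) : G →ₗ[ℂ] G := p • (LinearMap.id : G →ₗ[ℂ] G)

set_option linter.unusedSectionVars false

lemma tau_mul_theta : τ * θ = 1 := by rw [τ, θ, ← T_add]; norm_num
lemma theta_pow (k : ℕ) : (θ : 𝕃) ^ k = T (-(k : ℤ)) := by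
  rw [θ, T_pow]; ring_nf
lemma tau_pow (k : ℕ) : (τ : 𝕃) ^ k = T (k : ℤ) := by
  rw [τ, T_pow]; ring_nf
set_option linter.unusedSectionVars false

lemma theta_ne_zero : (θ : 𝕃) ≠ 0 := by
  rw [θ]; exact (isUnit_T (-1)).ne_zero
lemma tau_smul_theta_smul (x : G) : τ • θ • x = x := by
  rw [smul_smul, tau_mul_theta, one_smul]
lemma theta_smul_injective : Function.Injective (fun x : G => θ • x) := by
  intro a b hab
  have := congrArg (fun y : G => τ • y) hab
  simpa only [tau_smul_theta_smul] using this

lemma tau_mem_Ctau : τ ∈ Cτ := Algebra.self_mem_adjoin_singleton ℂ τ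
lemma theta_mem_Ctheta : θ ∈ Cθ := Algebra.self_mem_adjoin_singleton ℂ θ

lemma Ctau_smul (p : Cτ) (x : G) : p • x = (p : 𝕃) • x := rfl
lemma Ctheta_smul (p : Cθ) (x : G) : p • x = (p : 𝕃) • x := rfl

lemma aeval_tau_eq (f : Polynomial ℂ) : Polynomial.aeval τ f = Polynomial.toLaurent f := by
  have : (Polynomial.aeval τ : Polynomial ℂ →ₐ[ℂ] 𝕃) = Polynomial.toLaurentAlg := by
    apply Polynomial.algHom_ext
    simp [Polynomial.toLaurentAlg_apply, Polynomial.toLaurent_X, τ]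
  rw [this, Polynomial.toLaurentAlg_apply]

lemma aeval_theta_eq (f : Polynomial ℂ) :
    Polynomial.aeval θ f = invert (Polynomial.toLaurent f) := by
  have : (Polynomial.aeval θ : Polynomial ℂ →ₐ[ℂ] 𝕃)
      = (invert.toAlgHom.comp Polynomial.toLaurentAlg) := by
    apply Polynomial.algHom_ext
    simp [Polynomial.toLaurentAlg_apply, Polynomial.toLaurent_X, θ]
  rw [this]; rfl

lemma mem_Ctau_iff (p : 𝕃) : p ∈ Cτ ↔ ∃ f : Polynomial ℂ, Polynomial.toLaurent f = p := by
  rw [Cτ, Algebra.adjoin_singleton_eq_range_aeval]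
  constructor
  · rintro ⟨f, rfl⟩; exact ⟨f, (aeval_tau_eq f).symm⟩
  · rintro ⟨f, rfl⟩; exact ⟨f, aeval_tau_eq f⟩

lemma mem_Ctheta_iff (p : 𝕃) :
    p ∈ Cθ ↔ ∃ f : Polynomial ℂ, invert (Polynomial.toLaurent f) = p := by
  rw [Cθ, Algebra.adjoin_singleton_eq_range_aeval]
  constructor
  · rintro ⟨f, rfl⟩; exact ⟨f, (aeval_theta_eq f).symm⟩
  · rintro ⟨f, rfl⟩; exact ⟨f, aeval_theta_eq f⟩

lemma toLaurent_coeff (f : Polynomial ℂ) (n : ℕ) :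
    (Polynomial.toLaurent f).coeff (n : ℤ) = f.coeff n := by
  rw [coeff_toLaurent, ← Polynomial.toFinsupp_apply]
  exact Finsupp.mapDomain_apply Nat.castEmbedding.injective f.toFinsupp.coeff n

lemma toLaurent_coeff_neg (f : Polynomial ℂ) (n : ℤ) (hn : n < 0) :
    (Polynomial.toLaurent f).coeff n = 0 := by
  rw [coeff_toLaurent]
  apply Finsupp.mapDomain_notin_range
  rintro ⟨m, rfl⟩
  exact absurd hn (not_lt.mpr (Int.natCast_nonneg m))

lemma coeff_at_zero (p : 𝕃) {f : Polynomial ℂ} (hf : invert (Polynomial.toLaurent f) = p) :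
    p.coeff 0 = f.coeff 0 := by
  rw [← hf, invert_apply, neg_zero]
  exact_mod_cast toLaurent_coeff f 0

lemma Ctheta_decomp {p : 𝕃} (hp : p ∈ Cθ) :
    ∃ q : 𝕃, q ∈ Cθ ∧ p = algebraMap ℂ 𝕃 (p.coeff 0) + θ * q := by
  obtain ⟨f, hf⟩ := (mem_Ctheta_iff p).mp hp
  refine ⟨invert (Polynomial.toLaurent f.divX), (mem_Ctheta_iff _).mpr ⟨f.divX, rfl⟩, ?_⟩
  have h1 : Polynomial.X * f.divX + Polynomial.C (f.coeff 0) = f := Polynomial.X_mul_divX_add f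
  have h2 := congrArg (fun q => invert (Polynomial.toLaurent q)) h1
  simp only [map_add, map_mul, Polynomial.toLaurent_X, Polynomial.toLaurent_C, invert_T,
    invert_C] at h2
  rw [coeff_at_zero p hf, ← hf, ← h2, C_eq_algebraMap]
  rw [← θ]
  ring

lemma smul_coeff (c : ℂ) (q : 𝕃) (n : ℤ) : (c • q).coeff n = c * q.coeff n := by
  rw [Algebra.smul_def]
  have h1 : algebraMap ℂ 𝕃 c = LaurentPolynomial.C c := (C_eq_algebraMap c).symm
  rw [h1, ← single_eq_C]
  have := AddMonoidAlgebra.coeff_single_mul_apply q c (0 : ℤ) n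
  simpa using this

lemma Ctau_inter_theta_Ctheta {r s : 𝕃} (hr : r ∈ Cτ) (hs : s ∈ Cθ) (h : r = θ * s) :
    r = 0 := by
  obtain ⟨f, rfl⟩ := (mem_Ctau_iff r).mp hr
  obtain ⟨g, rfl⟩ := (mem_Ctheta_iff s).mp hs
  have hf : f = 0 := by
    ext n
    have hco := congrArg (fun q : 𝕃 => q.coeff (n : ℤ)) h
    rw [toLaurent_coeff] at hco
    have hθ : (θ : 𝕃) = AddMonoidAlgebra.single (-1 : ℤ) (1:ℂ) := rfl
    rw [hθ, AddMonoidAlgebra.coeff_single_mul_apply, invert_apply, one_mul] at hco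
    rw [toLaurent_coeff_neg g _ (by omega)] at hco
    simpa using hco
  rw [hf]; simp

lemma exists_theta_pow_mul_mem (p : 𝕃) : ∃ n : ℕ, p * θ ^ n ∈ Cθ := by
  obtain ⟨n, f', hf⟩ := exists_T_pow (invert p)
  refine ⟨n, ?_⟩
  have := congrArg invert hf
  rw [map_mul, invert_T, involutive_invert p] at this
  rw [theta_pow, ← this]
  exact (mem_Ctheta_iff _).mpr ⟨f', rfl⟩

lemma theta_pow_mul_mem (p : 𝕃) : ∃ n : ℕ, ∀ m : ℕ, n ≤ m → θ ^ m * p ∈ Cθ := by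
  obtain ⟨n, hn⟩ := exists_theta_pow_mul_mem p
  refine ⟨n, fun m hm => ?_⟩
  have : (θ:𝕃) ^ m * p = (p * θ ^ n) * θ ^ (m - n) := by
    rw [mul_assoc, ← pow_add, Nat.add_sub_cancel' hm]; ring
  rw [this]
  exact mul_mem hn (pow_mem theta_mem_Ctheta _)

lemma liftIndep {k : ℕ} {g : Fin k → G} (h : LinearIndependent Cθ g) :
    LinearIndependent 𝕃 g := by
  rw [Fintype.linearIndependent_iff] at h ⊢
  intro lam hlam i
  choose n hn using fun i => theta_pow_mul_mem (lam i)
  set N := Finset.univ.sup n with hN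
  have hmem : ∀ j, θ ^ N * lam j ∈ Cθ := fun j =>
    hn j N (Finset.le_sup (Finset.mem_univ j))
  have hz : ∑ j, (⟨θ ^ N * lam j, hmem j⟩ : Cθ) • g j = 0 := by
    have : ∑ j, (θ ^ N * lam j) • g j = θ ^ N • (0 : G) := by
      rw [← hlam, Finset.smul_sum]
      exact Finset.sum_congr rfl fun j _ => (smul_smul _ _ _).symm
    simpa [Ctheta_smul] using this
  have := h _ hz i
  have h0 : θ ^ N * lam i = 0 := congrArg Subtype.val this
  rcases mul_eq_zero.mp h0 with h1 | h1
  · exact absurd h1 (pow_ne_zero _ theta_ne_zero)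
  · exact h1

lemma invert_toLaurent_decomp (f : Polynomial ℂ) :
    invert (Polynomial.toLaurent f)
      = algebraMap ℂ 𝕃 (f.coeff 0) + θ * invert (Polynomial.toLaurent f.divX) := by
  have h1 : Polynomial.X * f.divX + Polynomial.C (f.coeff 0) = f := Polynomial.X_mul_divX_add f
  have h2 := congrArg (fun q => invert (Polynomial.toLaurent q)) h1
  simp only [map_add, map_mul, Polynomial.toLaurent_X, Polynomial.toLaurent_C, invert_T,
    invert_C] at h2
  rw [← h2, C_eq_algebraMap, ← θ]
  ring

lemma lsmul_mem_tau {M : Submodule Cτ G} {p : 𝕃} (hp : p ∈ Cτ) {x : G} (hx : x ∈ M) :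
    p • x ∈ M := M.smul_mem ⟨p, hp⟩ hx

lemma lsmul_mem_theta {M : Submodule Cθ G} {p : 𝕃} (hp : p ∈ Cθ) {x : G} (hx : x ∈ M) :
    p • x ∈ M := M.smul_mem ⟨p, hp⟩ hx

lemma csmul_mem_tau {M : Submodule Cτ G} (c : ℂ) {x : G} (hx : x ∈ M) : c • x ∈ M := by
  rw [← algebraMap_smul 𝕃 c x]
  exact lsmul_mem_tau (Subalgebra.algebraMap_mem Cτ c) hx

lemma csmul_mem_theta {M : Submodule Cθ G} (c : ℂ) {x : G} (hx : x ∈ M) : c • x ∈ M := by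
  rw [← algebraMap_smul 𝕃 c x]
  exact lsmul_mem_theta (Subalgebra.algebraMap_mem Cθ c) hx

lemma dtau_mem (dτ : Derivation ℂ 𝕃 𝕃) (hdτ : dτ τ = 1) {p : 𝕃} (hp : p ∈ Cτ) :
    dτ p ∈ Cτ := by
  induction hp using Algebra.adjoin_induction with
  | mem x hx =>
    rcases hx with rfl
    rw [hdτ]; exact one_mem Cτ
  | algebraMap r => rw [Derivation.map_algebraMap]; exact zero_mem Cτ
  | add a b ha hb iha ihb => rw [map_add]; exact add_mem iha ihb
  | mul a b ha hb iha ihb =>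
    rw [Derivation.leibniz, smul_eq_mul, smul_eq_mul]
    exact add_mem (mul_mem ha ihb) (mul_mem hb iha)

lemma exists_theta_pow_smul_mem (G₀ : Submodule Cθ G)
    (hspan : Submodule.span 𝕃 (G₀ : Set G) = ⊤) (x : G) : ∃ k : ℕ, θ ^ k • x ∈ G₀ := by
  let S : Submodule 𝕃 G :=
    { carrier := {y | ∃ k : ℕ, θ ^ k • y ∈ G₀}
      zero_mem' := ⟨0, by simp⟩
      add_mem' := by
        rintro a b ⟨k₁, h₁⟩ ⟨k₂, h₂⟩
        refine ⟨k₁ + k₂, ?_⟩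
        rw [smul_add]
        have e1 : (θ:𝕃) ^ (k₁ + k₂) • a = θ ^ k₂ • (θ ^ k₁ • a) := by
          rw [smul_smul]; congr 1; ring
        have e2 : (θ:𝕃) ^ (k₁ + k₂) • b = θ ^ k₁ • (θ ^ k₂ • b) := by
          rw [smul_smul]; congr 1; ring
        rw [e1, e2]
        exact add_mem (lsmul_mem_theta (pow_mem theta_mem_Ctheta _) h₁)
          (lsmul_mem_theta (pow_mem theta_mem_Ctheta _) h₂)
      smul_mem' := by
        rintro lam a ⟨k, hk⟩
        obtain ⟨j, hj⟩ := exists_theta_pow_mul_mem lam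
        refine ⟨k + j, ?_⟩
        have e : (θ:𝕃) ^ (k + j) • (lam • a) = (lam * θ ^ j) • (θ ^ k • a) := by
          rw [smul_smul, smul_smul]; congr 1; ring
        rw [e]
        exact lsmul_mem_theta hj hk }
  have hle : (⊤ : Submodule 𝕃 G) ≤ S := by
    rw [← hspan]
    exact Submodule.span_le.mpr (fun y hy => ⟨0, by simpa using hy⟩)
  exact hle (Submodule.mem_top)

lemma H_le_spanV (G₀ : Submodule Cθ G) (H : Submodule Cτ G)
    (hspan : Submodule.span 𝕃 (G₀ : Set G) = ⊤)
    (hdec : ∀ x ∈ G₀, ∃ a, a ∈ H ∧ a ∈ G₀ ∧ ∃ b ∈ G₀, x = a + θ • b) :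
    ∀ x ∈ H, x ∈ Submodule.span Cτ ((H : Set G) ∩ (G₀ : Set G)) := by
  suffices h : ∀ (k : ℕ) (x : G), x ∈ H → θ ^ k • x ∈ G₀ →
      x ∈ Submodule.span Cτ ((H : Set G) ∩ (G₀ : Set G)) by
    intro x hx
    obtain ⟨k, hk⟩ := exists_theta_pow_smul_mem G₀ hspan x
    exact h k x hx hk
  intro k
  induction k with
  | zero =>
    intro x hx hk
    rw [pow_zero, one_smul] at hk
    exact Submodule.subset_span ⟨hx, hk⟩
  | succ k ih =>
    intro x hx hk
    obtain ⟨a, haH, haG, b, hbG, hab⟩ := hdec _ hk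
    have hx' : x - τ ^ (k + 1) • a ∈ H := sub_mem hx (lsmul_mem_tau (pow_mem tau_mem_Ctau _) haH)
    have key : θ ^ k • (x - τ ^ (k + 1) • a) = b := by
      rw [smul_sub, smul_smul]
      have e1 : (θ:𝕃) ^ k * τ ^ (k+1) = τ := by
        rw [theta_pow, tau_pow, ← T_add, τ]
        norm_num
      have e2 : (θ:𝕃) ^ k • x = τ • (θ ^ (k+1) • x) := by
        rw [smul_smul, theta_pow, theta_pow, τ, ← T_add]
        norm_num
      rw [e1, e2, hab, smul_add, tau_smul_theta_smul]
      abel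
    have hx'' : θ ^ k • (x - τ ^ (k + 1) • a) ∈ G₀ := key ▸ hbG
    have hmem := ih _ hx' hx''
    have : x = (x - τ ^ (k + 1) • a) + τ ^ (k + 1) • a := by abel
    rw [this]
    exact add_mem hmem (lsmul_mem_tau (pow_mem tau_mem_Ctau _) (Submodule.subset_span ⟨haH, haG⟩))

/-- solvability of the Birkhoff problem: (1) ⟺ (2). -/
theorem statement0 (μ : ℕ) (G : Type) [AddCommGroup G] [Module ℂ G] [Module 𝕃 G]
    [IsScalarTower ℂ 𝕃 G] [Module.Free 𝕃 G] (hrank : Module.finrank 𝕃 G = μ)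
    (dτ : Derivation ℂ 𝕃 𝕃) (hdτ : dτ τ = 1)
    (D : G →ₗ[ℂ] G) (hD : ∀ (p : 𝕃) (g : G), D (p • g) = dτ p • g + p • D g)
    (G₀ : Submodule Cθ G) (hFG : G₀.FG) (hfree : Module.Free Cθ G₀)
    (hspan : Submodule.span 𝕃 (G₀ : Set G) = ⊤)
    (hstab : ∀ g ∈ G₀, -(D g) ∈ G₀) :
    (∃ (g : Fin μ → G) (A₀ A₁ : Matrix (Fin μ) (Fin μ) ℂ),
        (∀ i, g i ∈ G₀) ∧ LinearIndependent Cθ g ∧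
        Submodule.span Cθ (Set.range g) = G₀ ∧
        (∀ i, -(D (g i)) = (∑ j, A₀ i j • g j) + ∑ j, A₁ i j • (θ • g j)))
    ↔
    (∃ H : Submodule Cτ G, H.FG ∧ (∀ g ∈ H, τ • D g ∈ H) ∧
        Submodule.span 𝕃 (H : Set G) = ⊤ ∧
        (∀ x ∈ G₀, ∃ a, a ∈ H ∧ a ∈ G₀ ∧ ∃ b ∈ G₀, x = a + θ • b) ∧
        (∀ x : G, x ∈ H → x ∈ G₀ → (∃ b ∈ G₀, x = θ • b) → x = 0)) := by
  constructor
  · rintro ⟨g, A₀, A₁, hgG₀, hindep, hspanG₀, hode⟩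
    refine ⟨Submodule.span Cτ (Set.range g), Submodule.fg_span (Set.finite_range g),
      ?_, ?_, ?_, ?_⟩
    · -- stability
      intro x hx
      induction hx using Submodule.span_induction with
      | mem x hxm =>
        obtain ⟨i, rfl⟩ := hxm
        have hDgi : D (g i) = -((∑ j, A₀ i j • g j) + ∑ j, A₁ i j • (θ • g j)) := by
          rw [← hode i, neg_neg]
        have e : τ • D (g i)
            = -((∑ j, A₀ i j • (τ • g j)) + ∑ j, A₁ i j • g j) := by
          rw [hDgi, smul_neg, smul_add, Finset.smul_sum, Finset.smul_sum]
          congr 2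
          · exact Finset.sum_congr rfl fun j _ => smul_comm _ _ _
          · exact Finset.sum_congr rfl fun j _ => by
              rw [smul_comm, tau_smul_theta_smul]
        rw [e]
        refine neg_mem (add_mem (Submodule.sum_mem _ fun j _ => ?_)
          (Submodule.sum_mem _ fun j _ => ?_))
        · exact csmul_mem_tau _ (lsmul_mem_tau tau_mem_Ctau
            (Submodule.subset_span (Set.mem_range_self j)))
        · exact csmul_mem_tau _ (Submodule.subset_span (Set.mem_range_self j))
      | zero => simp
      | add x y hx hy ihx ihy => rw [map_add, smul_add]; exact add_mem ihx ihy
      | smul a x hxm ih =>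
        have : (a : 𝕃) • x = a • x := rfl
        rw [← this, hD, smul_add, smul_smul]
        have e2 : (τ * dτ (a:𝕃)) • x + τ • ((a:𝕃) • D x) = (τ * dτ (a:𝕃)) • x
            + (a:𝕃) • (τ • D x) := by
          rw [smul_smul, smul_smul, mul_comm τ (a:𝕃)]
        rw [e2]
        exact add_mem (lsmul_mem_tau (mul_mem tau_mem_Ctau (dtau_mem dτ hdτ a.2)) hxm)
          (lsmul_mem_tau (a.2) ih)
    · -- span top
      rw [Submodule.span_span_of_tower]
      have h1 : (G₀ : Set G) ⊆ (Submodule.span 𝕃 (Set.range g) : Set G) := by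
        rw [← hspanG₀]
        exact fun y hy => Submodule.span_le_restrictScalars Cθ 𝕃 (Set.range g) hy
      have h2 : Submodule.span 𝕃 (G₀ : Set G) ≤ Submodule.span 𝕃 (Set.range g) :=
        Submodule.span_le.mpr h1
      rw [hspan] at h2
      exact top_le_iff.mp h2
    · -- decomposition
      intro x hx
      rw [← hspanG₀, Submodule.mem_span_range_iff_exists_fun] at hx
      obtain ⟨c, hc⟩ := hx
      choose q hqmem hq using fun i => Ctheta_decomp (c i).2
      refine ⟨∑ i, ((c i : 𝕃).coeff 0) • g i, ?_, ?_, ∑ i, q i • g i, ?_, ?_⟩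
      · exact Submodule.sum_mem _ fun i _ =>
          csmul_mem_tau _ (Submodule.subset_span (Set.mem_range_self i))
      · exact Submodule.sum_mem _ fun i _ => csmul_mem_theta _ (hgG₀ i)
      · exact Submodule.sum_mem _ fun i _ => lsmul_mem_theta (hqmem i) (hgG₀ i)
      · rw [← hc, Finset.smul_sum, ← Finset.sum_add_distrib]
        refine Finset.sum_congr rfl fun i _ => ?_
        rw [Ctheta_smul]
        calc (c i : 𝕃) • g i
            = ((algebraMap ℂ 𝕃 ((c i : 𝕃).coeff 0)) + θ * q i) • g i := by rw [← hq i]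
          _ = ((c i : 𝕃).coeff 0) • g i + θ • (q i • g i) := by
              rw [add_smul, algebraMap_smul, mul_smul]
    · -- zero intersection
      intro x hxH hxG hxb
      obtain ⟨b, hbG, hxb⟩ := hxb
      rw [Submodule.mem_span_range_iff_exists_fun] at hxH
      obtain ⟨r, hr⟩ := hxH
      have hbG' : b ∈ Submodule.span Cθ (Set.range g) := hspanG₀ ▸ hbG
      rw [Submodule.mem_span_range_iff_exists_fun] at hbG'
      obtain ⟨s, hs⟩ := hbG'
      have hLI := liftIndep hindep
      rw [Fintype.linearIndependent_iff] at hLI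
      have hrel : ∑ i, ((r i : 𝕃) - θ * (s i : 𝕃)) • g i = 0 := by
        have : ∑ i, ((r i : 𝕃) - θ * (s i : 𝕃)) • g i
            = (∑ i, (r i : 𝕃) • g i) - θ • (∑ i, (s i : 𝕃) • g i) := by
          rw [Finset.smul_sum, ← Finset.sum_sub_distrib]
          exact Finset.sum_congr rfl fun i _ => by rw [sub_smul, mul_smul]
        rw [this]
        have hr' : ∑ i, (r i : 𝕃) • g i = x := hr
        have hs' : ∑ i, (s i : 𝕃) • g i = b := hs
        rw [hr', hs', hxb]
        abel
      have hzero := hLI _ hrel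
      have : x = ∑ i, (r i : 𝕃) • g i := hr.symm
      rw [this]
      refine Finset.sum_eq_zero fun i _ => ?_
      have h0 : (r i : 𝕃) = 0 :=
        Ctau_inter_theta_Ctheta (r i).2 (s i).2 (sub_eq_zero.mp (hzero i))
      rw [h0, zero_smul]
  · rintro ⟨H, hFGH, hstabH, hspanH, hdec, hzero⟩
    -- the ℂ-subspace V = H ∩ G₀
    set V : Submodule ℂ G := (H.restrictScalars ℂ) ⊓ (G₀.restrictScalars ℂ) with hV
    have hVmem : ∀ x : G, x ∈ V ↔ x ∈ H ∧ x ∈ G₀ := fun x => by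
      rw [hV, Submodule.mem_inf]
      exact Iff.rfl
    have hVset : (V : Set G) = (H : Set G) ∩ (G₀ : Set G) := by
      ext x
      simpa [Set.mem_inter_iff] using hVmem x
    -- a basis of G₀ over ℂ[θ]
    haveI hfinG₀ : Module.Finite Cθ ↥G₀ := Module.Finite.iff_fg.mpr hFG
    set n := Module.finrank Cθ ↥G₀ with hn
    let e : Module.Basis (Fin n) Cθ ↥G₀ := Module.finBasis Cθ ↥G₀
    have hvG : ∀ v : ↥V, (v : G) ∈ G₀ := fun v => ((hVmem v).mp v.2).2
    have hvH : ∀ v : ↥V, (v : G) ∈ H := fun v => ((hVmem v).mp v.2).1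
    have coe_sum_theta : ∀ (y : ↥G₀), (y : G) = ∑ i, (e.repr y i : 𝕃) • ((e i : ↥G₀) : G) := by
      intro y
      conv_lhs => rw [← e.sum_repr y]
      calc ((∑ i, e.repr y i • e i : ↥G₀) : G) = G₀.subtype (∑ i, e.repr y i • e i) := rfl
        _ = ∑ i, G₀.subtype (e.repr y i • e i) := map_sum _ _ _
        _ = ∑ i, (e.repr y i : 𝕃) • ((e i : ↥G₀) : G) := Finset.sum_congr rfl fun i _ => rfl
    -- the coefficient-extraction map, used to prove V is finite dimensional
    let π : ↥V →ₗ[ℂ] (Fin n → ℂ) :=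
      { toFun := fun v i => ((e.repr ⟨(v : G), hvG v⟩ i : 𝕃).coeff 0)
        map_add' := by
          intro v w
          funext i
          show ((e.repr ⟨((v + w : ↥V) : G), hvG (v + w)⟩ i : 𝕃).coeff 0)
              = ((e.repr ⟨(v : G), hvG v⟩ i : 𝕃).coeff 0) + ((e.repr ⟨(w : G), hvG w⟩ i : 𝕃).coeff 0)
          have h1 : (⟨((v + w : ↥V) : G), hvG (v + w)⟩ : ↥G₀)
              = ⟨(v : G), hvG v⟩ + ⟨(w : G), hvG w⟩ := rfl
          rw [h1, map_add, Finsupp.add_apply]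
          rw [show ((e.repr ⟨(v : G), hvG v⟩ i + e.repr ⟨(w : G), hvG w⟩ i : Cθ) : 𝕃)
              = (e.repr ⟨(v : G), hvG v⟩ i : 𝕃) + (e.repr ⟨(w : G), hvG w⟩ i : 𝕃) from rfl]
          rw [AddMonoidAlgebra.coeff_add, Finsupp.add_apply]
        map_smul' := by
          intro c v
          funext i
          show ((e.repr ⟨((c • v : ↥V) : G), hvG (c • v)⟩ i : 𝕃).coeff 0)
              = c * ((e.repr ⟨(v : G), hvG v⟩ i : 𝕃).coeff 0)
          have h1 : (⟨((c • v : ↥V) : G), hvG (c • v)⟩ : ↥G₀)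
              = c • (⟨(v : G), hvG v⟩ : ↥G₀) := rfl
          have h2 : e.repr (c • (⟨(v : G), hvG v⟩ : ↥G₀))
              = c • e.repr (⟨(v : G), hvG v⟩ : ↥G₀) :=
            LinearMap.map_smul_of_tower (e.repr : ↥G₀ →ₗ[Cθ] (Fin n →₀ Cθ)) c _
          rw [h1, h2, Finsupp.smul_apply]
          rw [show ((c • e.repr ⟨(v : G), hvG v⟩ i : Cθ) : 𝕃)
              = c • (e.repr ⟨(v : G), hvG v⟩ i : 𝕃) from rfl]
          rw [smul_coeff] }
    have hπinj : Function.Injective π := by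
      refine (injective_iff_map_eq_zero π).mpr ?_
      intro v hv
      have hcoeff : ∀ i, ((e.repr ⟨(v : G), hvG v⟩ i : 𝕃).coeff 0) = 0 := fun i => congrFun hv i
      have hq : ∀ i, ∃ q : 𝕃, q ∈ Cθ ∧ ((e.repr ⟨(v : G), hvG v⟩ i : 𝕃)) = θ * q := by
        intro i
        obtain ⟨q, hqm, hqe⟩ := Ctheta_decomp (e.repr ⟨(v : G), hvG v⟩ i).2
        exact ⟨q, hqm, by rw [hqe, hcoeff i, map_zero, zero_add]⟩
      choose q hqm hqe using hq
      have hsum := coe_sum_theta ⟨(v : G), hvG v⟩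
      have hsum2 : (v : G) = θ • ∑ i, q i • ((e i : ↥G₀) : G) := by
        rw [hsum, Finset.smul_sum]
        exact Finset.sum_congr rfl fun i _ => by rw [hqe i, mul_smul]
      have hbG : (∑ i, q i • ((e i : ↥G₀) : G)) ∈ G₀ :=
        Submodule.sum_mem _ fun i _ => lsmul_mem_theta (hqm i) (e i).2
      have h0 : (v : G) = 0 := hzero _ (hvH v) (hvG v) ⟨_, hbG, hsum2⟩
      exact Subtype.ext h0
    haveI hVfin : FiniteDimensional ℂ ↥V := FiniteDimensional.of_injective π hπinj
    set m := Module.finrank ℂ ↥V with hm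
    let w : Module.Basis (Fin m) ℂ ↥V := Module.finBasis ℂ ↥V
    set g0 : Fin m → G := fun i => ((w i : ↥V) : G) with hg0
    have hg0V : ∀ i, g0 i ∈ V := fun i => (w i).2
    have hg0H : ∀ i, g0 i ∈ H := fun i => ((hVmem _).mp (hg0V i)).1
    have hg0G : ∀ i, g0 i ∈ G₀ := fun i => ((hVmem _).mp (hg0V i)).2
    have coe_sum_V : ∀ (y : ↥V) , (y : G) = ∑ i, (w.repr y i) • g0 i := by
      intro y
      conv_lhs => rw [← w.sum_repr y]
      calc ((∑ i, w.repr y i • w i : ↥V) : G) = V.subtype (∑ i, w.repr y i • w i) := rfl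
        _ = ∑ i, V.subtype (w.repr y i • w i) := map_sum _ _ _
        _ = ∑ i, (w.repr y i) • g0 i := Finset.sum_congr rfl fun i _ => rfl
    have hrepr : ∀ v ∈ V, ∃ c : Fin m → ℂ, v = ∑ i, c i • g0 i := by
      intro v hv
      exact ⟨fun i => w.repr ⟨v, hv⟩ i, coe_sum_V ⟨v, hv⟩⟩
    have hcoef0 : ∀ c : Fin m → ℂ, ∑ i, c i • g0 i = 0 → ∀ i, c i = 0 := by
      intro c hc
      have h1 : (∑ i, c i • w i : ↥V) = 0 := by
        apply Subtype.val_injective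
        have : ((∑ i, c i • w i : ↥V) : G) = ∑ i, c i • g0 i := by
          calc ((∑ i, c i • w i : ↥V) : G) = V.subtype (∑ i, c i • w i) := rfl
            _ = ∑ i, V.subtype (c i • w i) := map_sum _ _ _
            _ = ∑ i, c i • g0 i := Finset.sum_congr rfl fun i _ => rfl
        rw [this, hc]
        rfl
      exact Fintype.linearIndependent_iff.mp w.linearIndependent c h1
    -- spanning over 𝕃
    have hHV : ∀ x ∈ H, x ∈ Submodule.span Cτ ((H : Set G) ∩ (G₀ : Set G)) :=
      H_le_spanV G₀ H hspan hdec
    have hspanVtop : Submodule.span 𝕃 (V : Set G) = ⊤ := by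
      rw [hVset]
      have h2 : Submodule.span 𝕃 (H : Set G)
          ≤ Submodule.span 𝕃 ((H : Set G) ∩ (G₀ : Set G)) :=
        Submodule.span_le.mpr (fun x hx => by
          have h3 := hHV x hx
          have h4 := Submodule.span_le_restrictScalars Cτ 𝕃 ((H : Set G) ∩ (G₀ : Set G)) h3
          exact h4)
      rw [hspanH] at h2
      exact top_le_iff.mp h2
    have hspan_g0top : Submodule.span 𝕃 (Set.range g0) = ⊤ := by
      have h1 : (V : Set G) ⊆ ↑(Submodule.span 𝕃 (Set.range g0)) := by
        intro v hv
        obtain ⟨c, hc⟩ := hrepr v hv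
        rw [hc]
        exact Submodule.sum_mem _ fun i _ =>
          Submodule.smul_of_tower_mem _ _ (Submodule.subset_span (Set.mem_range_self i))
      have h2 := Submodule.span_le.mpr h1
      rw [hspanVtop] at h2
      exact top_le_iff.mp h2
    -- peeling off powers of θ : G₀ is spanned by g0 over ℂ[θ]
    have hpeel : ∀ y, y ∈ G₀ → θ • y ∈ Submodule.span Cθ (Set.range g0) →
        y ∈ Submodule.span Cθ (Set.range g0) := by
      intro y hyG hy
      rw [Submodule.mem_span_range_iff_exists_fun] at hy
      obtain ⟨P, hP⟩ := hy
      choose q hqm hqe using fun i => Ctheta_decomp (P i).2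
      have hbG : (∑ i, q i • g0 i) ∈ G₀ :=
        Submodule.sum_mem _ fun i _ => lsmul_mem_theta (hqm i) (hg0G i)
      have hsplit : θ • y = (∑ i, ((P i : 𝕃).coeff 0) • g0 i) + θ • (∑ i, q i • g0 i) := by
        rw [← hP, Finset.smul_sum, ← Finset.sum_add_distrib]
        refine Finset.sum_congr rfl fun i _ => ?_
        calc (P i) • g0 i = ((P i : 𝕃)) • g0 i := rfl
          _ = (algebraMap ℂ 𝕃 ((P i : 𝕃).coeff 0) + θ * q i) • g0 i := by rw [← hqe i]
          _ = ((P i : 𝕃).coeff 0) • g0 i + θ • (q i • g0 i) := by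
              rw [add_smul, algebraMap_smul, mul_smul]
      have hv0V : (∑ i, ((P i : 𝕃).coeff 0) • g0 i) ∈ V :=
        Submodule.sum_mem _ fun i _ => V.smul_mem _ (hg0V i)
      have heq : (∑ i, ((P i : 𝕃).coeff 0) • g0 i) = θ • (y - ∑ i, q i • g0 i) := by
        rw [smul_sub, hsplit]
        abel
      have h0 : (∑ i, ((P i : 𝕃).coeff 0) • g0 i) = 0 :=
        hzero _ ((hVmem _).mp hv0V).1 ((hVmem _).mp hv0V).2
          ⟨y - ∑ i, q i • g0 i, sub_mem hyG hbG, heq⟩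
      have hyb : y = ∑ i, q i • g0 i := by
        have h1 : θ • (y - ∑ i, q i • g0 i) = θ • (0 : G) := by
          rw [smul_zero, ← heq, h0]
        have := theta_smul_injective h1
        have h2 : y - ∑ i, q i • g0 i = 0 := this
        exact sub_eq_zero.mp h2
      rw [hyb]
      exact Submodule.sum_mem _ fun i _ =>
        lsmul_mem_theta (hqm i) (Submodule.subset_span (Set.mem_range_self i))
    have hG₀span : ∀ x ∈ G₀, x ∈ Submodule.span Cθ (Set.range g0) := by
      suffices hkey : ∀ k : ℕ, ∀ x, x ∈ G₀ → θ ^ k • x ∈ Submodule.span Cθ (Set.range g0) →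
          x ∈ Submodule.span Cθ (Set.range g0) by
        intro x hx
        have hxtop : x ∈ Submodule.span 𝕃 (Set.range g0) := by
          rw [hspan_g0top]; trivial
        rw [Submodule.mem_span_range_iff_exists_fun] at hxtop
        obtain ⟨lam, hlam⟩ := hxtop
        choose nn hnn using fun i => theta_pow_mul_mem (lam i)
        set N := Finset.univ.sup nn with hN
        have hNx : θ ^ N • x ∈ Submodule.span Cθ (Set.range g0) := by
          rw [← hlam, Finset.smul_sum]
          refine Submodule.sum_mem _ fun i _ => ?_
          rw [smul_smul]
          exact lsmul_mem_theta (hnn i N (Finset.le_sup (Finset.mem_univ i)))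
            (Submodule.subset_span (Set.mem_range_self i))
        exact hkey N x hx hNx
      intro k
      induction k with
      | zero => intro x hx h; simpa using h
      | succ k ih =>
        intro x hx h
        have h1 : θ ^ k • (θ • x) ∈ Submodule.span Cθ (Set.range g0) := by
          rw [smul_smul, ← pow_succ]
          exact h
        exact hpeel x hx (ih (θ • x) (lsmul_mem_theta theta_mem_Ctheta hx) h1)
    -- linear independence of g0 over ℂ[θ]
    have hindep0 : LinearIndependent Cθ g0 := by
      rw [Fintype.linearIndependent_iff]
      intro P hP
      choose F hF using fun i => (mem_Ctheta_iff (P i : 𝕃)).mp (P i).2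
      have key : ∀ N : ℕ, ∀ Q : Fin m → Polynomial ℂ, (∀ i, (Q i).natDegree ≤ N) →
          ∑ i, invert (Polynomial.toLaurent (Q i)) • g0 i = 0 → ∀ i, Q i = 0 := by
        intro N
        induction N with
        | zero =>
          intro Q hdeg hsum i
          have hQC : ∀ j, Q j = Polynomial.C ((Q j).coeff 0) := fun j =>
            Polynomial.eq_C_of_natDegree_eq_zero (Nat.le_zero.mp (hdeg j))
          have hs2 : ∑ j, ((Q j).coeff 0) • g0 j = 0 := by
            rw [← hsum]
            refine Finset.sum_congr rfl fun j _ => ?_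
            conv_rhs => rw [hQC j]
            rw [Polynomial.toLaurent_C, invert_C, C_eq_algebraMap, algebraMap_smul]
          have := hcoef0 _ hs2 i
          rw [hQC i, this, map_zero]
        | succ N ih =>
          intro Q hdeg hsum i
          have hsplit : ∑ j, invert (Polynomial.toLaurent (Q j)) • g0 j
              = (∑ j, ((Q j).coeff 0) • g0 j)
                + θ • (∑ j, invert (Polynomial.toLaurent (Q j).divX) • g0 j) := by
            rw [Finset.smul_sum, ← Finset.sum_add_distrib]
            refine Finset.sum_congr rfl fun j _ => ?_
            rw [invert_toLaurent_decomp (Q j), add_smul, algebraMap_smul, mul_smul]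
          rw [hsplit] at hsum
          have hbG : (∑ j, invert (Polynomial.toLaurent (Q j).divX) • g0 j) ∈ G₀ :=
            Submodule.sum_mem _ fun j _ =>
              lsmul_mem_theta ((mem_Ctheta_iff _).mpr ⟨_, rfl⟩) (hg0G j)
          have hv0V : (∑ j, ((Q j).coeff 0) • g0 j) ∈ V :=
            Submodule.sum_mem _ fun j _ => V.smul_mem _ (hg0V j)
          have heq : (∑ j, ((Q j).coeff 0) • g0 j)
              = θ • (-(∑ j, invert (Polynomial.toLaurent (Q j).divX) • g0 j)) := by
            rw [smul_neg, eq_neg_iff_add_eq_zero]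
            exact hsum
          have h0 : (∑ j, ((Q j).coeff 0) • g0 j) = 0 :=
            hzero _ ((hVmem _).mp hv0V).1 ((hVmem _).mp hv0V).2
              ⟨_, neg_mem hbG, heq⟩
          have hb0 : (∑ j, invert (Polynomial.toLaurent (Q j).divX) • g0 j) = 0 := by
            have h1 : θ • (∑ j, invert (Polynomial.toLaurent (Q j).divX) • g0 j)
                = θ • (0 : G) := by
              rw [smul_zero]
              have := hsum
              rw [h0, zero_add] at this
              exact this
            exact theta_smul_injective h1
          have hdivX0 : ∀ j, (Q j).divX = 0 := by
            refine ih (fun j => (Q j).divX) (fun j => ?_) hb0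
            have h2 : (Q j).divX.natDegree = (Q j).natDegree - 1 :=
              Polynomial.natDegree_divX_eq_natDegree_tsub_one
            show (Q j).divX.natDegree ≤ N
            have h3 := hdeg j
            omega
          have hc0 : (Q i).coeff 0 = 0 := hcoef0 _ h0 i
          have := Polynomial.X_mul_divX_add (Q i)
          rw [hdivX0 i, hc0, mul_zero, map_zero, zero_add] at this
          exact this.symm
      set N := Finset.univ.sup (fun i => (F i).natDegree) with hN
      have hsum0 : ∑ i, invert (Polynomial.toLaurent (F i)) • g0 i = 0 := by
        rw [← hP]
        refine Finset.sum_congr rfl fun i _ => ?_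
        rw [hF i]
        rfl
      have hF0 := key N F (fun i => Finset.le_sup (f := fun i => (F i).natDegree) (Finset.mem_univ i)) hsum0
      intro i
      apply Subtype.ext
      rw [← hF i, hF0 i, map_zero, map_zero]
      rfl
    -- counting : m = μ
    have hLI : LinearIndependent 𝕃 g0 := liftIndep hindep0
    let B : Module.Basis (Fin m) 𝕃 G := Module.Basis.mk hLI (by rw [hspan_g0top])
    have hμm : μ = m := by
      rw [← hrank, Module.finrank_eq_card_basis B, Fintype.card_fin]
    let E : Fin μ ≃ Fin m := finCongr hμm
    set g : Fin μ → G := fun i => g0 (E i) with hg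
    have hgV : ∀ i, g i ∈ V := fun i => hg0V (E i)
    have hgH : ∀ i, g i ∈ H := fun i => hg0H (E i)
    have hgG : ∀ i, g i ∈ G₀ := fun i => hg0G (E i)
    have hrangeg : Set.range g = Set.range g0 := E.surjective.range_comp g0
    have hrepr' : ∀ v ∈ V, ∃ c : Fin μ → ℂ, v = ∑ i, c i • g i := by
      intro v hv
      obtain ⟨c, hc⟩ := hrepr v hv
      refine ⟨fun i => c (E i), ?_⟩
      rw [hc]
      exact (Equiv.sum_comp E (fun j => c j • g0 j)).symm
    have hspanG₀' : Submodule.span Cθ (Set.range g) = G₀ := by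
      apply le_antisymm
      · exact Submodule.span_le.mpr (fun x hx => by
          obtain ⟨i, rfl⟩ := hx
          exact hgG i)
      · intro x hx
        rw [hrangeg]
        exact hG₀span x hx
    have hindep' : LinearIndependent Cθ g := hindep0.comp E E.injective
    -- the connection matrices
    have hode' : ∀ i : Fin μ, ∃ c c' : Fin μ → ℂ,
        -(D (g i)) = (∑ j, c j • g j) + ∑ j, c' j • (θ • g j) := by
      intro i
      have ht : -(D (g i)) ∈ G₀ := hstab _ (hgG i)
      obtain ⟨a₀, ha₀H, ha₀G, b, hbG, htab⟩ := hdec _ ht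
      obtain ⟨a₁, ha₁H, ha₁G, b₂, hb₂G, hbab⟩ := hdec _ hbG
      have hτt : τ • (-(D (g i))) ∈ H := by
        rw [smul_neg]
        exact neg_mem (hstabH _ (hgH i))
      have hstep : τ • (-(D (g i))) = τ • a₀ + (a₁ + θ • b₂) := by
        calc τ • (-(D (g i))) = τ • a₀ + τ • (θ • b) := by rw [htab, smul_add]
          _ = τ • a₀ + b := by rw [tau_smul_theta_smul]
          _ = τ • a₀ + (a₁ + θ • b₂) := by rw [hbab]
      have hkey : θ • b₂ = τ • (-(D (g i))) - τ • a₀ - a₁ := by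
        rw [hstep]
        abel
      have hmemH : θ • b₂ ∈ H := by
        rw [hkey]
        exact sub_mem (sub_mem hτt (lsmul_mem_tau tau_mem_Ctau ha₀H)) ha₁H
      have h0 : θ • b₂ = 0 :=
        hzero _ hmemH (lsmul_mem_theta theta_mem_Ctheta hb₂G) ⟨b₂, hb₂G, rfl⟩
      have ht2 : -(D (g i)) = a₀ + θ • a₁ := by
        rw [htab, hbab, smul_add, h0, smul_zero, add_zero]
      obtain ⟨c, hc⟩ := hrepr' a₀ ((hVmem _).mpr ⟨ha₀H, ha₀G⟩)
      obtain ⟨c', hc'⟩ := hrepr' a₁ ((hVmem _).mpr ⟨ha₁H, ha₁G⟩)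
      refine ⟨c, c', ?_⟩
      rw [ht2, hc, hc', Finset.smul_sum]
      congr 1
      exact Finset.sum_congr rfl fun j _ => smul_comm _ _ _
    choose A₀ A₁ hA using hode'
    exact ⟨g, Matrix.of A₀, Matrix.of A₁, hgG, hindep', hspanG₀', hA⟩
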